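/- arXiv:1805.07748 — 4 statements merged into one kernel-verified Lean document; each statement's English description precedes it below -/
import Mathlib

section
/- Given an internal category (M, G, s, t, e, ∘) in the category of groups, the restriction of t to Ker s, together with the conjugation action of G (embedded via e) on Ker s, forms a crossed module. -/
/-- A crossed module `(H, G, mu)`: a group homomorphism together with an
action of `G` on `H` by automorphisms, satisfying the precrossed module identity and
the Peiffer identity. -/
structure CrossedModule (H G : Type) [Group H] [Group G] where
  μ : H →* G
  act : G →* MulAut H
  pre : ∀ (g : G) (h : H), μ (act g h) = g * μ h * g⁻¹
  peiffer : ∀ h h' : H, act (μ h) h' = h * h' * h⁻¹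

/-- An internal category in the category of groups: groups `M` (morphisms) and `G`
(objects), source and target homomorphisms `s, t : M → G`, an identity homomorphism
`e : G → M` with `s ∘ e = t ∘ e = id`, and a composition, defined on composable
pairs (`s x = t y`), which is a group homomorphism on the subgroup of composable
pairs and satisfies the category axioms. -/
structure InternalCatGrp (M G : Type) [Group M] [Group G] where
  s : M →* G
  t : M →* G
  e : G →* M
  se : ∀ g, s (e g) = g
  te : ∀ g, t (e g) = g
  /-- total composition function; only its values on composable pairs matter -/
  comp : M → M → M
  comp_mul : ∀ {x y x' y' : M}, s x = t y → s x' = t y' →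
    comp (x * x') (y * y') = comp x y * comp x' y'
  comp_one : comp 1 1 = 1
  s_comp : ∀ {x y : M}, s x = t y → s (comp x y) = s y
  t_comp : ∀ {x y : M}, s x = t y → t (comp x y) = t x
  comp_id : ∀ x, comp x (e (s x)) = x
  id_comp : ∀ x, comp (e (t x)) x = x
  comp_assoc : ∀ {x y z : M}, s x = t y → s y = t z →
    comp x (comp y z) = comp (comp x y) z

/-- Given an internal category `(M, G, s, t, e, ∘)` in groups, the
restriction of `t` to `Ker s`, together with the conjugation action of `G`
(embedded via `e`) on `Ker s`, forms a crossed module. -/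
theorem internalCat_to_crossedModule {M G : Type} [Group M] [Group G]
    (C : InternalCatGrp M G) :
    ∃ X : CrossedModule C.s.ker G,
      (∀ k : C.s.ker, X.μ k = C.t (k : M)) ∧
      (∀ (g : G) (k : C.s.ker), ((X.act g k : C.s.ker) : M) = C.e g * (k : M) * (C.e g)⁻¹) := by
  -- key formula for composition
  have key : ∀ {x y : M}, C.s x = C.t y → C.comp x y = x * (C.e (C.t y))⁻¹ * y := by
    intro x y h
    have hx : x = (x * (C.e (C.s x))⁻¹) * C.e (C.s x) := by group
    have hy : y = (1 : M) * y := (one_mul y).symm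
    have h1 : C.s (x * (C.e (C.s x))⁻¹) = C.t (1 : M) := by
      simp [C.se]
    have h2 : C.s (C.e (C.s x)) = C.t y := by rw [C.se]; exact h
    calc C.comp x y = C.comp ((x * (C.e (C.s x))⁻¹) * C.e (C.s x)) ((1 : M) * y) := by
            rw [← hx, ← hy]
      _ = C.comp (x * (C.e (C.s x))⁻¹) 1 * C.comp (C.e (C.s x)) y := C.comp_mul h1 h2
      _ = x * (C.e (C.t y))⁻¹ * y := by
            have ha : C.comp (x * (C.e (C.s x))⁻¹) 1 = x * (C.e (C.s x))⁻¹ := by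
              have := C.comp_id (x * (C.e (C.s x))⁻¹)
              have hs : C.s (x * (C.e (C.s x))⁻¹) = 1 := by simp [C.se]
              rwa [hs, map_one] at this
            have hb : C.comp (C.e (C.s x)) y = y := by
              rw [h]; exact C.id_comp y
            rw [ha, hb, h]
  -- the Peiffer computation in M
  have peifM : ∀ h h' : M, C.s h = 1 → C.s h' = 1 →
      C.e (C.t h) * h' * (C.e (C.t h))⁻¹ = h * h' * h⁻¹ := by
    intro h h' hh hh'
    have d1 : h = C.comp (C.e (C.t h)) h := (C.id_comp h).symm
    have d2 : h' = C.comp h' 1 := by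
      have := C.comp_id h'
      rw [hh', map_one] at this; exact this.symm
    have hc1 : C.s (C.e (C.t h)) = C.t h := C.se _
    have hc2 : C.s h' = C.t (1 : M) := by simp [hh']
    have : h * h' = C.comp (C.e (C.t h) * h') (h * 1) := by
      calc h * h' = C.comp (C.e (C.t h)) h * C.comp h' 1 := by rw [← d1, ← d2]
        _ = C.comp (C.e (C.t h) * h') (h * 1) := (C.comp_mul hc1 hc2).symm
    rw [mul_one] at this
    have hc3 : C.s (C.e (C.t h) * h') = C.t h := by simp [C.se, hh']
    rw [key hc3] at this
    rw [this]; group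
  refine ⟨{ μ := C.t.comp C.s.ker.subtype
            act := MulAut.conjNormal.comp C.e
            pre := ?_
            peiffer := ?_ }, fun k => rfl, fun g k => MulAut.conjNormal_apply _ _⟩
  · intro g h
    simp [MulAut.conjNormal_apply, C.te]
  · intro h h'
    ext
    have := peifM h h' h.2 h'.2
    simpa [MulAut.conjNormal_apply] using this
end

section
/- A crossed module (H, G, μ) is an abelian group object in the category of crossed modules if and only if H and G are abelian groups and the action of G on H is trivial. -/
/-- A crossed module `(H, G, μ)` is an abelian group object in the
category of crossed modules if and only if `H` and `G` are abelian groups and the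
action of `G` on `H` is trivial.  An abelian group object structure is a morphism of
crossed modules `m : (H×H, G×G, μ×μ) → (H, G, μ)` from the product crossed module
(so `mH`, `mG` are group homomorphisms compatible with `μ` and with the componentwise
action), together with a unit, inverses, satisfying associativity and commutativity. -/
theorem crossedModule_abelian_group_object_iff {H G : Type} [Group H] [Group G]
    (X : CrossedModule H G) :
    (∃ (mH : H × H →* H) (mG : G × G →* G) (iH : H →* H) (iG : G →* G),
      -- (mH, mG) is a morphism of crossed modules from the product crossed module
      (∀ p : H × H, X.μ (mH p) = mG (X.μ p.1, X.μ p.2)) ∧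
      (∀ (g g' : G) (h h' : H),
        mH (X.act g h, X.act g' h') = X.act (mG (g, g')) (mH (h, h'))) ∧
      -- (iH, iG) is a morphism of crossed modules
      (∀ h : H, X.μ (iH h) = iG (X.μ h)) ∧
      (∀ (g : G) (h : H), iH (X.act g h) = X.act (iG g) (iH h)) ∧
      -- unit laws (the unit is the morphism from the zero crossed module)
      (∀ h : H, mH (h, 1) = h ∧ mH (1, h) = h) ∧
      (∀ g : G, mG (g, 1) = g ∧ mG (1, g) = g) ∧
      -- associativity
      (∀ a b c : H, mH (mH (a, b), c) = mH (a, mH (b, c))) ∧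
      (∀ a b c : G, mG (mG (a, b), c) = mG (a, mG (b, c))) ∧
      -- commutativity
      (∀ a b : H, mH (a, b) = mH (b, a)) ∧
      (∀ a b : G, mG (a, b) = mG (b, a)) ∧
      -- inverses
      (∀ h : H, mH (h, iH h) = 1) ∧
      (∀ g : G, mG (g, iG g) = 1))
    ↔ ((∀ h h' : H, h * h' = h' * h) ∧ (∀ g g' : G, g * g' = g' * g) ∧
       (∀ (g : G) (h : H), X.act g h = h)) := by
  constructor
  · rintro ⟨mH, mG, iH, iG, _, hact, _, _, huH, huG, _, _, hcH, hcG, _, _⟩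
    have mHmul : ∀ a b : H, mH (a, b) = a * b := by
      intro a b
      have : (a, b) = (a, (1 : H)) * ((1 : H), b) := by simp
      rw [this, map_mul, (huH a).1, (huH b).2]
    have mGmul : ∀ a b : G, mG (a, b) = a * b := by
      intro a b
      have : (a, b) = (a, (1 : G)) * ((1 : G), b) := by simp
      rw [this, map_mul, (huG a).1, (huG b).2]
    refine ⟨fun a b => by rw [← mHmul, hcH, mHmul],
            fun a b => by rw [← mGmul, hcG, mGmul], ?_⟩
    intro g h
    have := hact g 1 1 h
    simpa [mHmul, mGmul] using this.symm
  · rintro ⟨hH, hG, htriv⟩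
    have hH' : ∀ a b c : H, a * (b * c) = b * (a * c) := fun a b c => by
      rw [← mul_assoc, hH a b, mul_assoc]
    have hG' : ∀ a b c : G, a * (b * c) = b * (a * c) := fun a b c => by
      rw [← mul_assoc, hG a b, mul_assoc]
    refine ⟨{ toFun := fun p => p.1 * p.2, map_one' := by simp,
              map_mul' := by rintro ⟨a, b⟩ ⟨c, d⟩; simp [mul_assoc, hH'] },
            { toFun := fun p => p.1 * p.2, map_one' := by simp,
              map_mul' := by rintro ⟨a, b⟩ ⟨c, d⟩; simp [mul_assoc, hG'] },
            { toFun := fun h => h⁻¹, map_one' := by simp,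
              map_mul' := by intro a b; simp [mul_inv_rev, hH] },
            { toFun := fun g => g⁻¹, map_one' := by simp,
              map_mul' := by intro a b; simp [mul_inv_rev, hG] },
            ?_, ?_, ?_, ?_, ?_, ?_, ?_, ?_, ?_, ?_, ?_, ?_⟩ <;>
      simp [htriv, mul_assoc, hH, hG, hH', hG']
    intro g h
    have := htriv g ((X.act g)⁻¹ h)
    simpa using this
end

section
/- For a crossed module (H, G, μ), the Moore complex of its nerve simplicial group is trivial in dimensions ≥ 2; in dimension 1 it is isomorphic to H and in dimension 0 it is G, with boundary map corresponding to μ. Consequently π₁ of the nerve is isomorphic to Ker μ and π₀ of the nerve is isomorphic to G/Im μ. -/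
/-- The `n`-th level of the nerve of a crossed module `(H, G, μ)`:
`H ⋊ (⋯ (H ⋊ G) ⋯)` with `n` semidirect factors of `H`, realised as the set
`(Fin n → H) × G`. -/
abbrev NerveLvl (H G : Type) (n : ℕ) : Type := (Fin n → H) × G

/-- The face maps of the nerve of a crossed module: `d₀` drops the first entry,
`dᵢ` (for `0 < i < n+1`) multiplies the `i`-th and `(i+1)`-st entries, and the last
face drops the last entry and multiplies `g` by `μ` of it. -/
def nerveFace {H G : Type} [Group H] [Group G] (X : CrossedModule H G) (n : ℕ)
    (i : Fin (n + 2)) (x : NerveLvl H G (n + 1)) : NerveLvl H G n :=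
  (fun j : Fin n =>
      if (j : ℕ) + 1 < (i : ℕ) then x.1 j.castSucc
      else if (j : ℕ) + 1 = (i : ℕ) then x.1 j.castSucc * x.1 j.succ
      else x.1 j.succ,
   if (i : ℕ) = n + 1 then X.μ (x.1 (Fin.last n)) * x.2 else x.2)

/-- For a crossed module `(H, G, μ)`, the Moore complex of the nerve is
trivial in dimensions `≥ 2`; in dimension `1` it is (isomorphic to) `H`, in dimension
`0` it is `G`, and the boundary corresponds to `μ`.  Consequently `π₁` of the nerve is
isomorphic to `Ker μ` and `π₀` is isomorphic to `G/Im μ`. -/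
theorem moore_complex_of_nerve {H G : Type} [Group H] [Group G]
    (X : CrossedModule H G) :
    -- (a) the Moore complex is trivial in dimensions ≥ 2:
    (∀ (n : ℕ) (x : NerveLvl H G (n + 2)),
      (∀ i : Fin (n + 2), nerveFace X (n + 1) i.castSucc x =
        ((fun _ => 1 : Fin (n + 1) → H), (1 : G))) →
      x = ((fun _ => 1 : Fin (n + 2) → H), (1 : G))) ∧
    -- (b) in dimension 1 the Moore complex is {(h, 1) | h ∈ H} ≅ H, with boundary μ:
    (∀ x : NerveLvl H G 1,
      nerveFace X 0 0 x = ((fun _ => 1 : Fin 0 → H), (1 : G)) ↔ x.2 = 1) ∧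
    (∀ h : H, nerveFace X 0 1 ((fun _ => h : Fin 1 → H), (1 : G)) =
      ((fun j => j.elim0 : Fin 0 → H), X.μ h)) ∧
    -- (c) π₁(Nerve) ≅ Ker μ: the cycles in dimension 1 correspond exactly to Ker μ
    --     (and by (a) there are no boundaries from dimension 2):
    (∀ x : NerveLvl H G 1,
      (nerveFace X 0 0 x = ((fun _ => 1 : Fin 0 → H), (1 : G)) ∧
       nerveFace X 0 1 x = ((fun _ => 1 : Fin 0 → H), (1 : G)))
      ↔ (x.2 = 1 ∧ x.1 0 ∈ X.μ.ker)) ∧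
    -- (d) π₀(Nerve) ≅ G/Im μ: the image of the boundary ∂₁ is exactly μ(H):
    (∀ g : G,
      (∃ x : NerveLvl H G 1,
        nerveFace X 0 0 x = ((fun _ => 1 : Fin 0 → H), (1 : G)) ∧
        nerveFace X 0 1 x = ((fun _ => 1 : Fin 0 → H), g))
      ↔ g ∈ X.μ.range) := by

  have finzero : ∀ (f g : Fin 0 → H), f = g := fun f g => funext (fun j => j.elim0)
  refine ⟨?_, ?_, ?_, ?_, ?_⟩
  · intro n x hx
    have h0 := hx 0
    have h1 := hx 1
    simp only [nerveFace, Prod.mk.injEq] at h0 h1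
    have c0 : ((0 : Fin (n+2)).castSucc : ℕ) = 0 := rfl
    have c1 : ((1 : Fin (n+2)).castSucc : ℕ) = 1 := rfl
    rw [c0] at h0; rw [c1] at h1
    have hsucc : ∀ j : Fin (n + 1), x.1 j.succ = 1 := by
      intro j
      have := congrFun h0.1 j
      simpa using this
    have hg : x.2 = 1 := by simpa using h0.2
    have hx0 : x.1 0 = 1 := by
      have := congrFun h1.1 0
      simp at this
      have h1' : x.1 (0 : Fin (n+1)).succ = 1 := hsucc 0
      rw [show ((0 : Fin (n+1)).succ) = (1 : Fin (n+2)) from rfl] at h1'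
      rw [h1', mul_one] at this
      exact this
    have h1all : x.1 = fun _ => 1 := by
      funext k
      induction k using Fin.cases with
      | zero => exact hx0
      | succ j => exact hsucc j
    exact Prod.ext h1all hg
  · intro x
    constructor
    · intro h
      have := congrArg Prod.snd h
      simpa [nerveFace] using this
    · intro h
      refine Prod.ext (finzero _ _) ?_
      simpa [nerveFace] using h
  · intro h
    refine Prod.ext (finzero _ _) ?_
    simp [nerveFace]
  · intro x
    constructor
    · rintro ⟨h0, h1⟩
      have hg : x.2 = 1 := by
        have := congrArg Prod.snd h0
        simpa [nerveFace] using this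
      have := congrArg Prod.snd h1
      simp [nerveFace, hg] at this
      exact ⟨hg, this⟩
    · rintro ⟨hg, hk⟩
      have hk' : X.μ (x.1 0) = 1 := hk
      constructor
      · exact Prod.ext (finzero _ _) (by simpa [nerveFace] using hg)
      · refine Prod.ext (finzero _ _) ?_
        simp [nerveFace, hg, show Fin.last 0 = 0 from rfl, hk']
  · intro g
    constructor
    · rintro ⟨x, h0, h1⟩
      have hg : x.2 = 1 := by
        have := congrArg Prod.snd h0
        simpa [nerveFace] using this
      have := congrArg Prod.snd h1
      simp [nerveFace, hg] at this
      exact ⟨x.1 (Fin.last 0), this⟩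
    · rintro ⟨h, rfl⟩
      refine ⟨((fun _ => h), 1), Prod.ext (finzero _ _) (by simp [nerveFace]), Prod.ext (finzero _ _) ?_⟩
      simp [nerveFace]
end

section
/- Let 0 → (H',G',μ') → (H,G,μ) → (H'',G'',μ'') → 0 be a short exact sequence of crossed modules. Then the induced sequence of abelian groups G'/(μ'(H')·[G,G']) → G/(μ(H)·[G,G]) → G''/(μ''(H'')·[G'',G'']) → 0 is exact, where [G,G'] denotes the subgroup of G' generated by elements g·g'·g⁻¹·g'⁻¹ with g ∈ G, g' ∈ G' (G acting on G' via the inclusion G' ⊴ G). -/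
/-- A morphism of crossed modules `(ρ, ν) : (H, G, μ) → (H', G', μ')`. -/
structure XModHom {H G H' G' : Type} [Group H] [Group G] [Group H'] [Group G']
    (X : CrossedModule H G) (X' : CrossedModule H' G') where
  ρ : H →* H'
  ν : G →* G'
  commutes : ∀ h : H, ν (X.μ h) = X'.μ (ρ h)
  equivar : ∀ (g : G) (h : H), ρ (X.act g h) = X'.act (ν g) (ρ h)

/-- A short exact sequence of crossed modules
`0 → (H',G',μ') → (H,G,μ) → (H'',G'',μ'') → 0` induces an exact sequence of abelian
groups `G'/(μ'(H')·[G,G']) → G/(μ(H)·[G,G]) → G''/(μ''(H'')·[G'',G'']) → 0`.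
Here `[G,G']` is the subgroup of `G'` generated by the commutators of elements of
`G` with elements of (the image of) `G'`; exactness is expressed at the level of
cosets.  -/
theorem five_term_tail_exactness {H' G' H G H'' G'' : Type}
    [Group H'] [Group G'] [Group H] [Group G] [Group H''] [Group G'']
    (X' : CrossedModule H' G') (X : CrossedModule H G) (X'' : CrossedModule H'' G'')
    (f : XModHom X' X) (f' : XModHom X X'')
    -- short exactness
    (hρinj : Function.Injective f.ρ) (hνinj : Function.Injective f.ν)
    (hρsurj : Function.Surjective f'.ρ) (hνsurj : Function.Surjective f'.ν)
    (hρex : f'.ρ.ker = f.ρ.range) (hνex : f'.ν.ker = f.ν.range) :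
    -- notation: N' = μ'(H')·[G,G'] ⊆ G',  N = μ(H)·[G,G] ⊆ G,
    --           N'' = μ''(H'')·[G'',G''] ⊆ G''
    (letI N' : Subgroup G' :=
        X'.μ.range ⊔ (⁅(⊤ : Subgroup G), f.ν.range⁆.comap f.ν)
     letI N : Subgroup G := X.μ.range ⊔ commutator G
     letI N'' : Subgroup G'' := X''.μ.range ⊔ commutator G''
     -- the maps of quotients are well defined:
     N'.map f.ν ≤ N ∧ N.map f'.ν ≤ N'' ∧
     -- exactness at G''/N'' (surjectivity):
     (∀ g'' : G'', ∃ g : G, (f'.ν g)⁻¹ * g'' ∈ N'') ∧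
     -- exactness at G/N: the coset of g is killed in G''/N'' iff it comes from G'/N':
     (∀ g : G, f'.ν g ∈ N'' ↔ ∃ g' : G', (f.ν g')⁻¹ * g ∈ N)) := by
  -- Abbreviations
  set N' : Subgroup G' := X'.μ.range ⊔ (⁅(⊤ : Subgroup G), f.ν.range⁆.comap f.ν) with hN'
  set N : Subgroup G := X.μ.range ⊔ commutator G with hN
  set N'' : Subgroup G'' := X''.μ.range ⊔ commutator G'' with hN''
  -- N is normal
  haveI hμN : (X.μ.range).Normal := by
    constructor
    rintro x ⟨h, rfl⟩ g
    exact ⟨X.act g h, (X.pre g h)⟩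
  haveI hNnormal : N.Normal := Subgroup.sup_normal _ _
  -- claim 1
  have claim1 : N'.map f.ν ≤ N := by
    rw [hN', Subgroup.map_sup]
    apply sup_le
    · rintro x ⟨y, ⟨h', rfl⟩, rfl⟩
      exact Subgroup.mem_sup_left ⟨f.ρ h', (f.commutes h').symm⟩
    · refine le_trans (Subgroup.map_comap_le _ _) (le_trans ?_ le_sup_right)
      rw [commutator_def]
      exact Subgroup.commutator_mono le_top le_top
  -- claim 2
  have claim2 : N.map f'.ν ≤ N'' := by
    rw [hN, Subgroup.map_sup]
    apply sup_le
    · rintro x ⟨y, ⟨h, rfl⟩, rfl⟩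
      exact Subgroup.mem_sup_left ⟨f'.ρ h, (f'.commutes h).symm⟩
    · refine le_trans ?_ le_sup_right
      rw [commutator_def, commutator_def, Subgroup.map_commutator]
      exact Subgroup.commutator_mono le_top le_top
  -- N'' is contained in the image of N
  have htop : (⊤ : Subgroup G).map f'.ν = ⊤ := by
    rw [← MonoidHom.range_eq_map, MonoidHom.range_eq_top]
    exact hνsurj
  have claim3 : N'' ≤ N.map f'.ν := by
    rw [hN'']
    apply sup_le
    · rintro x ⟨h'', rfl⟩
      obtain ⟨h, rfl⟩ := hρsurj h''
      exact ⟨X.μ h, Subgroup.mem_sup_left ⟨h, rfl⟩, f'.commutes h⟩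
    · have : commutator G'' = (commutator G).map f'.ν := by
        rw [commutator_def, commutator_def, Subgroup.map_commutator, htop]
      rw [this]
      exact Subgroup.map_mono le_sup_right
  refine ⟨claim1, claim2, ?_, ?_⟩
  · intro g''
    obtain ⟨g, rfl⟩ := hνsurj g''
    exact ⟨g, by simpa using N''.one_mem⟩
  · intro g
    constructor
    · intro hg
      obtain ⟨n, hn, hfn⟩ := claim3 hg
      have hker : n⁻¹ * g ∈ f'.ν.ker := by
        rw [MonoidHom.mem_ker, map_mul, map_inv, hfn]
        simp
      rw [hνex] at hker
      obtain ⟨g', hg'⟩ := hker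
      refine ⟨g', ?_⟩
      have heq : (f.ν g')⁻¹ * g = g⁻¹ * n * (g⁻¹)⁻¹ := by
        rw [hg']; group
      rw [heq]
      exact hNnormal.conj_mem n hn g⁻¹
    · rintro ⟨g', hmem⟩
      have h1 : f'.ν (f.ν g') = 1 := by
        have : f.ν g' ∈ f'.ν.ker := by rw [hνex]; exact ⟨g', rfl⟩
        exact this
      have : f'.ν g = f'.ν ((f.ν g')⁻¹ * g) := by
        rw [map_mul, map_inv, h1]; simp
      rw [this]
      exact claim2 ⟨_, hmem, rfl⟩
end
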